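/- Let A, B ∈ ℝ^{n×n} be such that the pair (A, B) is diagonally Riccati stable. Then for every diagonal positive definite matrix D, the matrix D(A+B) is Hurwitz; in particular, A + B is Hurwitz. -/

import Mathlib

open Matrix

/-- The pair `(A, B)` is diagonally Riccati stable. -/
def DiagRiccatiStable {m : ℕ} (A B : Matrix (Fin m) (Fin m) ℝ) : Prop :=
  ∃ P Q : Matrix (Fin m) (Fin m) ℝ, P.IsDiag ∧ Q.IsDiag ∧ P.PosDef ∧ Q.PosDef ∧
    (-(Aᵀ * P + P * A + Q + P * B * Q⁻¹ * Bᵀ * P)).PosDef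

/-- A real matrix is Hurwitz if all its (complex) eigenvalues have negative real part. -/
def IsHurwitz {m : ℕ} (M : Matrix (Fin m) (Fin m) ℝ) : Prop :=
  ∀ μ ∈ spectrum ℂ (M.map (algebraMap ℝ ℂ)), μ.re < 0

/-- The real part of the complex quadratic form of a real positive definite matrix is
positive on nonzero complex vectors. -/
lemma re_quad_pos {n : ℕ} {S : Matrix (Fin n) (Fin n) ℝ} (hS : S.PosDef)
    (v : Fin n → ℂ) (hv : v ≠ 0) :
    0 < (star v ⬝ᵥ (S.map (algebraMap ℝ ℂ)) *ᵥ v).re := by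
  set x : Fin n → ℝ := fun i => (v i).re with hx
  set y : Fin n → ℝ := fun i => (v i).im with hy
  have key : (star v ⬝ᵥ (S.map (algebraMap ℝ ℂ)) *ᵥ v).re
      = x ⬝ᵥ S *ᵥ x + y ⬝ᵥ S *ᵥ y := by
    simp only [dotProduct, mulVec, Pi.star_apply, map_apply, Finset.mul_sum, Complex.re_sum]
    rw [← Finset.sum_add_distrib]
    refine Finset.sum_congr rfl fun i _ => ?_
    rw [← Finset.sum_add_distrib]
    refine Finset.sum_congr rfl fun j _ => ?_
    simp [Complex.mul_re, Complex.mul_im, hx, hy]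
  rw [key]
  have hxy : x ≠ 0 ∨ y ≠ 0 := by
    by_contra h
    push_neg at h
    apply hv
    funext i
    have h1 : x i = 0 := by rw [h.1]; rfl
    have h2 : y i = 0 := by rw [h.2]; rfl
    exact Complex.ext h1 h2
  have sx : (0:ℝ) ≤ x ⬝ᵥ S *ᵥ x := by simpa using hS.posSemidef.dotProduct_mulVec_nonneg x
  have sy : (0:ℝ) ≤ y ⬝ᵥ S *ᵥ y := by simpa using hS.posSemidef.dotProduct_mulVec_nonneg y
  rcases hxy with h | h
  · have := hS.dotProduct_mulVec_pos h; simp only [star_trivial] at this; linarith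
  · have := hS.dotProduct_mulVec_pos h; simp only [star_trivial] at this; linarith

/-- Lyapunov criterion: if `NᵀP + PN = -S` with `P, S` positive definite, then every
complex eigenvalue of `N` has negative real part. -/
lemma lyapunov_hurwitz {n : ℕ} {N P S : Matrix (Fin n) (Fin n) ℝ}
    (hP : P.PosDef) (hS : S.PosDef) (h : Nᵀ * P + P * N = -S) :
    IsHurwitz N := by
  intro μ hμ
  set f := algebraMap ℝ ℂ with hf
  set Nc := N.map f with hNc
  set Pc := P.map f with hPc
  set Sc := S.map f with hSc
  rw [spectrum.mem_iff, Matrix.isUnit_iff_isUnit_det, isUnit_iff_ne_zero, not_ne_iff,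
    ← Matrix.exists_mulVec_eq_zero_iff] at hμ
  obtain ⟨v, hv, hveq⟩ := hμ
  have heig : Nc *ᵥ v = μ • v := by
    have h0 : (algebraMap ℂ (Matrix (Fin n) (Fin n) ℂ)) μ *ᵥ v - Nc *ᵥ v = 0 := by
      rw [← Matrix.sub_mulVec]; exact hveq
    have h2 : (algebraMap ℂ (Matrix (Fin n) (Fin n) ℂ)) μ *ᵥ v = μ • v := by
      rw [Algebra.algebraMap_eq_smul_one, Matrix.smul_mulVec, Matrix.one_mulVec]
    rw [h2] at h0
    exact (sub_eq_zero.mp h0).symm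
  have hct : Ncᴴ = Nᵀ.map f := by
    ext i j
    simp [conjTranspose_apply, hNc, hf, Complex.conj_ofReal]
  set t := star v ⬝ᵥ Pc *ᵥ v with ht
  have h1 : star v ⬝ᵥ ((Pc * Nc) *ᵥ v) = μ * t := by
    rw [← Matrix.mulVec_mulVec, heig, Matrix.mulVec_smul, dotProduct_smul, smul_eq_mul, ht]
  have h2 : star v ⬝ᵥ ((Nᵀ.map f * Pc) *ᵥ v) = starRingEnd ℂ μ * t := by
    rw [← Matrix.mulVec_mulVec, Matrix.dotProduct_mulVec, ← hct, ← Matrix.star_mulVec, heig,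
      star_smul, smul_dotProduct, smul_eq_mul]
    rfl
  have hmain : star v ⬝ᵥ (((Nᵀ * P + P * N).map f) *ᵥ v) = (μ + starRingEnd ℂ μ) * t := by
    rw [Matrix.map_add _ (map_add f), Matrix.map_mul, Matrix.map_mul, Matrix.add_mulVec,
      dotProduct_add, ← hPc, h1, h2]
    ring
  rw [h] at hmain
  have hneg : ((μ + starRingEnd ℂ μ) * t).re = -(star v ⬝ᵥ Sc *ᵥ v).re := by
    rw [← hmain]
    have : (-S).map f = -Sc := by ext i j; simp [hSc, hf]
    rw [this, Matrix.neg_mulVec, dotProduct_neg, Complex.neg_re]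
  rw [Complex.add_conj, Complex.re_ofReal_mul] at hneg
  have hSpos := re_quad_pos hS v hv
  have hPpos := re_quad_pos hP v hv
  rw [← hSc] at hSpos
  rw [← hPc, ← ht] at hPpos
  nlinarith

theorem diag_riccati_implies_D_stability {n : ℕ} (A B : Matrix (Fin n) (Fin n) ℝ)
    (hAB : DiagRiccatiStable A B) :
    (∀ D : Matrix (Fin n) (Fin n) ℝ, D.IsDiag → D.PosDef → IsHurwitz (D * (A + B))) ∧
      IsHurwitz (A + B) := by
  obtain ⟨P, Q, hPd, hQd, hPpos, hQpos, hR⟩ := hAB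
  set M := A + B with hM
  set C := Q - Bᵀ * P with hC
  have hQdet : IsUnit Q.det := isUnit_iff_ne_zero.mpr hQpos.det_pos.ne'
  have hQQi : Q * Q⁻¹ = 1 := Matrix.mul_nonsing_inv _ hQdet
  have hQiQ : Q⁻¹ * Q = 1 := Matrix.nonsing_inv_mul _ hQdet
  have hQsym : Qᵀ = Q := by
    rw [← conjTranspose_eq_transpose_of_trivial]; exact hQpos.isHermitian
  have hPsym : Pᵀ = P := by
    rw [← conjTranspose_eq_transpose_of_trivial]; exact hPpos.isHermitian
  have hCt : Cᵀ = Q - P * B := by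
    rw [hC, transpose_sub, hQsym, transpose_mul, hPsym, transpose_transpose]
  have hexp : Cᵀ * Q⁻¹ * C = Q - Bᵀ*P - P*B + P*B*Q⁻¹*(Bᵀ*P) := by
    rw [hCt, hC]
    have e : (Q - P*B) * Q⁻¹ * (Q - Bᵀ*P)
        = Q*Q⁻¹*Q - Q*Q⁻¹*(Bᵀ*P) - P*B*(Q⁻¹*Q) + P*B*Q⁻¹*(Bᵀ*P) := by noncomm_ring
    rw [e, hQQi, hQiQ, Matrix.one_mul, Matrix.one_mul, Matrix.mul_one]
  set S := -(Mᵀ * P + P * M) with hSdef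
  have hSeq : S = -(Aᵀ * P + P * A + Q + P * B * Q⁻¹ * Bᵀ * P) + Cᵀ * Q⁻¹ * C := by
    rw [hexp, hSdef, hM, transpose_add]
    noncomm_ring
  have hSpos : S.PosDef := by
    rw [hSeq]
    refine hR.add_posSemidef ?_
    have := (hQpos.inv).posSemidef.conjTranspose_mul_mul_same C
    rwa [conjTranspose_eq_transpose_of_trivial] at this
  have hLyap : ∀ D : Matrix (Fin n) (Fin n) ℝ, D.IsDiag → D.PosDef → IsHurwitz (D * M) := by
    intro D hDd hDpos
    have hPdiag : diagonal P.diag = P := hPd.diagonal_diag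
    have hDdiag : diagonal D.diag = D := hDd.diagonal_diag
    have hppos : ∀ i, 0 < P.diag i := posDef_diagonal_iff.mp (by rw [hPdiag]; exact hPpos)
    have hdpos : ∀ i, 0 < D.diag i := posDef_diagonal_iff.mp (by rw [hDdiag]; exact hDpos)
    have hDinv : D⁻¹ = diagonal (fun i => (D.diag i)⁻¹) := by
      refine Matrix.inv_eq_right_inv ?_
      ext i j
      rw [Matrix.mul_diagonal, Matrix.one_apply]
      by_cases hij : i = j
      · subst hij
        simp only [Matrix.diagonal_apply_eq]
        exact mul_inv_cancel₀ (hdpos i).ne'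
      · simp [hij, hDd hij]
    have hP' : (P * D⁻¹).PosDef := by
      rw [hDinv, ← hPdiag, diagonal_mul_diagonal]
      exact posDef_diagonal_iff.mpr fun i => mul_pos (hppos i) (inv_pos.mpr (hdpos i))
    have hPD : D * P * D⁻¹ = P := by
      rw [hDinv]
      nth_rewrite 1 [← hDdiag]
      ext i j
      rw [Matrix.mul_diagonal, Matrix.diagonal_mul]
      by_cases hij : i = j
      · subst hij
        rw [mul_comm (D.diag i), mul_assoc, mul_inv_cancel₀ (hdpos i).ne', mul_one]
      · simp [hPd hij]
    have hDdet : IsUnit D.det := isUnit_iff_ne_zero.mpr hDpos.det_pos.ne'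
    have hDiD : D⁻¹ * D = 1 := Matrix.nonsing_inv_mul _ hDdet
    have hDsym : Dᵀ = D := by
      rw [← conjTranspose_eq_transpose_of_trivial]; exact hDpos.isHermitian
    have key : (D * M)ᵀ * (P * D⁻¹) + (P * D⁻¹) * (D * M) = -S := by
      rw [transpose_mul, hDsym]
      have e1 : Mᵀ * D * (P * D⁻¹) = Mᵀ * (D * P * D⁻¹) := by noncomm_ring
      have e2 : P * D⁻¹ * (D * M) = P * (D⁻¹ * D) * M := by noncomm_ring
      rw [e1, e2, hPD, hDiD, Matrix.mul_one, hSdef, neg_neg]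
    exact lyapunov_hurwitz hP' hSpos key
  refine ⟨hLyap, ?_⟩
  have := hLyap 1 isDiag_one Matrix.PosDef.one
  rwa [Matrix.one_mul] at this
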